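/- Let f(x) = x^ρ ℓ(x) p(x) with ℓ slowly varying at infinity, ρ ∈ ℝ, r > 1, and p ∈ P_r (positive, bounded, right-continuous, inf on [1,r] positive, log-periodic with period r). Then the function f^*(λ) = limsup_{x→∞} f(λx)/f(x) is continuous at λ = 1 if and only if p is continuous on (0,∞). -/

import Mathlib

open Filter Set Real

open Filter Set Real

/-- `p ∈ P_r`: positive, bounded, right-continuous, bounded away from `0` on `[1,r]`,
and logarithmically periodic with period `r`. -/
def MemP (r : ℝ) (p : ℝ → ℝ) : Prop :=
  (∀ x > (0:ℝ), 0 < p x) ∧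
  (∃ M : ℝ, ∀ x > (0:ℝ), p x ≤ M) ∧
  (∀ x > (0:ℝ), ContinuousWithinAt p (Set.Ici x) x) ∧
  (∃ c > (0:ℝ), ∀ x ∈ Set.Icc (1:ℝ) r, c ≤ p x) ∧
  (∀ x > (0:ℝ), p (x * r) = p x)

/-- `ℓ` is slowly varying at infinity (and eventually positive). -/
def SlowlyVarying (l : ℝ → ℝ) : Prop :=
  (∀ᶠ x in Filter.atTop, 0 < l x) ∧
  ∀ lam > (0:ℝ),
    Filter.Tendsto (fun x : ℝ => l (lam * x) / l x) Filter.atTop (nhds 1)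

/-- `f ∈ RL(p, r, ρ)` with slowly varying part `ℓ`:
`f(x rⁿ)/((x rⁿ)^ρ ℓ(x rⁿ)) → p(x)` at every continuity point `x > 0` of `p`. -/
def MemRL (f : ℝ → ℝ) (p : ℝ → ℝ) (r ρ : ℝ) (l : ℝ → ℝ) : Prop :=
  ∀ x > (0:ℝ), ContinuousAt p x →
    Filter.Tendsto (fun n : ℕ => f (x * r^n) / ((x * r^n) ^ ρ * l (x * r^n)))
      Filter.atTop (nhds (p x))

/-- `f` is ultimately monotone: monotone (in either direction) on some `[x₀, ∞)`. -/
def UltimatelyMonotone (f : ℝ → ℝ) : Prop :=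
  ∃ x₀ : ℝ, MonotoneOn f (Set.Ici x₀) ∨ AntitoneOn f (Set.Ici x₀)

private lemma per_zpow {r : ℝ} {p : ℝ → ℝ} (hr : 1 < r)
    (hper : ∀ x > (0:ℝ), p (x * r) = p x) :
    ∀ x > (0:ℝ), ∀ n : ℤ, p (x * r ^ n) = p x := by
  intro x hx n
  have hr0 : (0:ℝ) < r := lt_trans one_pos hr
  induction n using Int.induction_on with
  | zero => simp
  | succ k ih =>
      have h1 : x * r ^ ((k:ℤ) + 1) = (x * r ^ (k:ℤ)) * r := by
        rw [zpow_add_one₀ (ne_of_gt hr0)]; ring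
      have hpos : 0 < x * r ^ (k:ℤ) := mul_pos hx (zpow_pos hr0 _)
      rw [h1, hper _ hpos, ih]
  | pred k ih =>
      have hpos : 0 < x * r ^ (-(k:ℤ) - 1) := mul_pos hx (zpow_pos hr0 _)
      have h1 : (x * r ^ (-(k:ℤ) - 1)) * r = x * r ^ (-(k:ℤ)) := by
        rw [mul_assoc, ← zpow_add_one₀ (ne_of_gt hr0)]
        norm_num
      calc p (x * r ^ (-(k:ℤ) - 1)) = p ((x * r ^ (-(k:ℤ) - 1)) * r) :=
            (hper _ hpos).symm
        _ = p (x * r ^ (-(k:ℤ))) := by rw [h1]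
        _ = p x := ih

private lemma reduce {r : ℝ} (hr : 1 < r) {x : ℝ} (hx : 0 < x) :
    ∃ y ∈ Set.Ico (1:ℝ) r, ∃ n : ℤ, x = y * r ^ n := by
  have hr0 : (0:ℝ) < r := lt_trans one_pos hr
  obtain ⟨n, h1, h2⟩ := exists_mem_Ico_zpow hx hr
  have hrn : (0:ℝ) < r ^ n := zpow_pos hr0 n
  refine ⟨x / r ^ n, ⟨(one_le_div hrn).2 h1, ?_⟩, n, by field_simp⟩
  rw [div_lt_iff₀ hrn]
  calc x < r ^ (n + 1) := h2
    _ = r * r ^ n := by rw [zpow_add_one₀ (ne_of_gt hr0)]; ring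

private lemma aux_limsup_le {g h : ℝ → ℝ} {a : ℝ}
    (hge : ∀ᶠ x in atTop, (0:ℝ) ≤ g x) (hle : ∀ᶠ x in atTop, g x ≤ h x)
    (hh : Tendsto h atTop (nhds a)) : limsup g atTop ≤ a := by
  have h1 : IsCoboundedUnder (· ≤ ·) atTop g :=
    isCoboundedUnder_le_of_eventually_le atTop hge
  calc limsup g atTop ≤ limsup h atTop := limsup_le_limsup hle h1 hh.isBoundedUnder_le
    _ = a := hh.limsup_eq

private lemma aux_le_limsup_seq {g : ℝ → ℝ} {xseq : ℕ → ℝ} {a : ℝ}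
    (hx : Tendsto xseq atTop atTop) (hb : IsBoundedUnder (· ≤ ·) atTop g)
    (ha : Tendsto (fun k => g (xseq k)) atTop (nhds a)) : a ≤ limsup g atTop := by
  refine le_of_forall_pos_le_add fun ε hε => ?_
  have key : a - ε ≤ limsup g atTop := by
    apply le_limsup_of_frequently_le _ hb
    rw [frequently_atTop]
    intro N
    have h1 : ∀ᶠ k in atTop, a - ε ≤ g (xseq k) :=
      ha.eventually (eventually_ge_nhds (by linarith))
    have h2 : ∀ᶠ k in atTop, N ≤ xseq k := hx.eventually_ge_atTop N
    obtain ⟨k, hk1, hk2⟩ := (h1.and h2).exists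
    exact ⟨xseq k, hk2, hk1⟩
  linarith

set_option maxHeartbeats 1000000 in
theorem statement_4 (f p : ℝ → ℝ) (r ρ : ℝ) (l : ℝ → ℝ)
    (hr : 1 < r) (hl : SlowlyVarying l) (hp : MemP r p)
    (hf : ∀ x > (0:ℝ), f x = x ^ ρ * l x * p x) :
    ContinuousAt
        (fun lam : ℝ => Filter.limsup (fun x : ℝ => f (lam * x) / f x) Filter.atTop)
        1 ↔
      ContinuousOn p (Set.Ioi 0) := by
  obtain ⟨hpos, ⟨M, hM⟩, hrc, ⟨c, hc0, hc⟩, hper⟩ := hp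
  have hr0 : (0:ℝ) < r := lt_trans one_pos hr
  have hzp := per_zpow hr hper
  -- global lower bound
  have hlow : ∀ x > (0:ℝ), c ≤ p x := by
    intro x hx
    obtain ⟨y, ⟨hy1, hy2⟩, n, rfl⟩ := reduce hr hx
    have hy0 : (0:ℝ) < y := lt_of_lt_of_le one_pos hy1
    rw [hzp y hy0 n]
    exact hc y ⟨hy1, le_of_lt hy2⟩
  have hM0 : (0:ℝ) < M := lt_of_lt_of_le hc0 (le_trans (hlow 1 one_pos) (hM 1 one_pos))
  -- eventual formula for the ratio
  have hE1 : ∀ lam : ℝ, 0 < lam → ∀ᶠ x in atTop,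
      f (lam * x) / f x = lam ^ ρ * (l (lam * x) / l x) * (p (lam * x) / p x) := by
    intro lam hlam
    have hmap : Tendsto (fun x : ℝ => lam * x) atTop atTop :=
      Tendsto.const_mul_atTop hlam tendsto_id
    filter_upwards [hl.1, hmap.eventually hl.1, eventually_gt_atTop 0] with x hx1 hx2 hx0
    have hlx : 0 < lam * x := mul_pos hlam hx0
    rw [hf _ hlx, hf _ hx0, Real.mul_rpow hlam.le hx0.le]
    have hp1 : p x ≠ 0 := ne_of_gt (hpos x hx0)
    have hp2 : (0:ℝ) < x ^ ρ := Real.rpow_pos_of_pos hx0 ρ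
    field_simp
  -- eventual nonnegativity
  have hE0 : ∀ lam : ℝ, 0 < lam → ∀ᶠ x in atTop, (0:ℝ) ≤ f (lam * x) / f x := by
    intro lam hlam
    have hmap : Tendsto (fun x : ℝ => lam * x) atTop atTop :=
      Tendsto.const_mul_atTop hlam tendsto_id
    filter_upwards [hE1 lam hlam, hl.1, hmap.eventually hl.1, eventually_gt_atTop 0]
      with x he hx1 hx2 hx0
    rw [he]
    have := hpos _ (mul_pos hlam hx0)
    have := hpos _ hx0
    have : (0:ℝ) < lam ^ ρ := Real.rpow_pos_of_pos hlam ρ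
    positivity
  -- eventual upper bound by tendsto function
  have hEub : ∀ lam : ℝ, 0 < lam → ∀ᶠ x in atTop,
      f (lam * x) / f x ≤ lam ^ ρ * (l (lam * x) / l x) * (M / c) := by
    intro lam hlam
    have hmap : Tendsto (fun x : ℝ => lam * x) atTop atTop :=
      Tendsto.const_mul_atTop hlam tendsto_id
    filter_upwards [hE1 lam hlam, hl.1, hmap.eventually hl.1, eventually_gt_atTop 0]
      with x he hx1 hx2 hx0
    rw [he]
    have hrat : p (lam * x) / p x ≤ M / c :=
      div_le_div₀ hM0.le (hM _ (mul_pos hlam hx0)) hc0 (hlow _ hx0)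
    have hnn : (0:ℝ) ≤ lam ^ ρ * (l (lam * x) / l x) := by positivity
    exact mul_le_mul_of_nonneg_left hrat hnn
  -- boundedness of the ratio
  have hBdd : ∀ lam : ℝ, 0 < lam →
      IsBoundedUnder (· ≤ ·) atTop (fun x => f (lam * x) / f x) := by
    intro lam hlam
    have hb : Tendsto (fun x => lam ^ ρ * (l (lam * x) / l x) * (M / c)) atTop
        (nhds (lam ^ ρ * 1 * (M / c))) := ((hl.2 lam hlam).const_mul _).mul_const _
    exact hb.isBoundedUnder_le.mono_le (hEub lam hlam)
  -- upper bound on the limsup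
  have hFle : ∀ lam K : ℝ, 0 < lam → (∀ x > (0:ℝ), p (lam * x) / p x ≤ K) →
      limsup (fun x : ℝ => f (lam * x) / f x) atTop ≤ lam ^ ρ * K := by
    intro lam K hlam hK
    have hle : ∀ᶠ x in atTop,
        f (lam * x) / f x ≤ lam ^ ρ * (l (lam * x) / l x) * K := by
      have hmap : Tendsto (fun x : ℝ => lam * x) atTop atTop :=
        Tendsto.const_mul_atTop hlam tendsto_id
      filter_upwards [hE1 lam hlam, hl.1, hmap.eventually hl.1, eventually_gt_atTop 0]
        with x he hx1 hx2 hx0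
      rw [he]
      have hnn : (0:ℝ) ≤ lam ^ ρ * (l (lam * x) / l x) := by positivity
      exact mul_le_mul_of_nonneg_left (hK x hx0) hnn
    have hh : Tendsto (fun x => lam ^ ρ * (l (lam * x) / l x) * K) atTop
        (nhds (lam ^ ρ * 1 * K)) := ((hl.2 lam hlam).const_mul _).mul_const _
    have := aux_limsup_le (hE0 lam hlam) hle hh
    rwa [mul_one] at this
  -- lower bound on the limsup through a periodic sequence
  have hFge : ∀ lam y : ℝ, 0 < lam → 0 < y →
      lam ^ ρ * (p (lam * y) / p y) ≤
        limsup (fun x : ℝ => f (lam * x) / f x) atTop := by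
    intro lam y hlam hy
    have hxs : Tendsto (fun k : ℕ => y * r ^ (k:ℤ)) atTop atTop := by
      have h1 : Tendsto (fun k : ℕ => r ^ k) atTop atTop :=
        tendsto_pow_atTop_atTop_of_one_lt hr
      have h2 : Tendsto (fun k : ℕ => y * r ^ k) atTop atTop :=
        Tendsto.const_mul_atTop hy h1
      simpa [zpow_natCast] using h2
    apply aux_le_limsup_seq hxs (hBdd lam hlam)
    have heq : ∀ᶠ k : ℕ in atTop,
        f (lam * (y * r ^ (k:ℤ))) / f (y * r ^ (k:ℤ))
          = lam ^ ρ * (l (lam * (y * r ^ (k:ℤ))) / l (y * r ^ (k:ℤ))) *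
              (p (lam * y) / p y) := by
      filter_upwards [hxs.eventually (hE1 lam hlam)] with k hk
      rw [hk, hzp y hy (k:ℤ)]
      have : lam * (y * r ^ (k:ℤ)) = (lam * y) * r ^ (k:ℤ) := by ring
      rw [this, hzp (lam * y) (mul_pos hlam hy) (k:ℤ)]
    have htend : Tendsto (fun k : ℕ =>
        lam ^ ρ * (l (lam * (y * r ^ (k:ℤ))) / l (y * r ^ (k:ℤ))) *
          (p (lam * y) / p y)) atTop (nhds (lam ^ ρ * 1 * (p (lam * y) / p y))) := by
      exact (((hl.2 lam hlam).comp hxs).const_mul _).mul_const _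
    rw [← mul_one (lam ^ ρ * (p (lam * y) / p y))]
    have := htend.congr' (heq.mono fun k hk => hk.symm)
    convert this using 2
    ring
  -- value at 1
  have hFone : limsup (fun x : ℝ => f (1 * x) / f x) atTop = 1 := by
    have hev : ∀ᶠ x in atTop, f (1 * x) / f x = 1 := by
      filter_upwards [hl.1, eventually_gt_atTop 0] with x hx1 hx0
      rw [one_mul, div_self]
      rw [hf x hx0]
      have := hpos x hx0
      have : (0:ℝ) < x ^ ρ := Real.rpow_pos_of_pos hx0 ρ
      positivity
    rw [limsup_congr hev]
    exact limsup_const 1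
  have hrpow : ContinuousAt (fun t : ℝ => t ^ ρ) 1 :=
    Real.continuousAt_rpow_const 1 ρ (Or.inl one_ne_zero)
  constructor
  · -- continuity of F at 1 implies continuity of p
    intro hcont
    by_contra hnc
    simp only [ContinuousOn] at hnc
    push_neg at hnc
    obtain ⟨x₀, hx₀, hncw⟩ := hnc
    have hx0 : (0:ℝ) < x₀ := hx₀
    have hnca : ¬ ContinuousAt p x₀ := fun h => hncw h.continuousWithinAt
    have hnleft : ¬ Tendsto p (nhdsWithin x₀ (Iio x₀)) (nhds (p x₀)) := by
      intro hleft
      apply hnca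
      have hright : Tendsto p (nhdsWithin x₀ (Ici x₀)) (nhds (p x₀)) := hrc x₀ hx0
      rw [ContinuousAt, ← nhdsLT_sup_nhdsGE x₀, tendsto_sup]
      exact ⟨hleft, hright⟩
    rw [Metric.tendsto_nhdsWithin_nhds] at hnleft
    push_neg at hnleft
    obtain ⟨ε, hε0, hfreq⟩ := hnleft
    obtain ⟨u, hu0, huM⟩ : ∃ u : ℝ, 0 < u ∧ ∀ q : ℝ, 0 < q → q ≤ M → u * q ≤ ε := by
      refine ⟨ε / M, by positivity, fun q hq hqM => ?_⟩
      rw [div_mul_eq_mul_div, div_le_iff₀ hM0]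
      nlinarith
    obtain ⟨s, hs0, hs1⟩ : ∃ s : ℝ, 0 < s ∧ (1 - s) * (1 + u) = 1 + u / 2 := by
      refine ⟨1 - (1 + u / 2) / (1 + u), ?_, ?_⟩
      · rw [sub_pos, div_lt_one (by linarith)]
        linarith
      · field_simp
        ring
    obtain ⟨δF, hδF0, hδF⟩ := Metric.continuousAt_iff.1 hcont (u / 2) (by positivity)
    obtain ⟨δ₂, hδ₂0, hδ₂⟩ := Metric.continuousAt_iff.1 hrpow s hs0
    set δ : ℝ := min δF δ₂ with hδdef
    have hδ0 : 0 < δ := lt_min hδF0 hδ₂0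
    obtain ⟨y, hyIio, hyd, hyp⟩ := hfreq (min (δ * x₀ / 2) (x₀ / 2))
      (lt_min (by positivity) (by positivity))
    have hylt : y < x₀ := hyIio
    rw [Real.dist_eq] at hyd
    have hyd1 : |y - x₀| < δ * x₀ / 2 := lt_of_lt_of_le hyd (min_le_left _ _)
    have hyd2 : |y - x₀| < x₀ / 2 := lt_of_lt_of_le hyd (min_le_right _ _)
    have hy0 : x₀ / 2 < y := by
      have := abs_lt.1 hyd2
      linarith [this.1]
    have hy0' : (0:ℝ) < y := by linarith
    rw [Real.dist_eq] at hyp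
    have hpx₀M : p x₀ ≤ M := hM x₀ hx0
    have hpx₀0 : 0 < p x₀ := hpos x₀ hx0
    have hpy0 : 0 < p y := hpos y hy0'
    have hpyM : p y ≤ M := hM y hy0'
    have hmain : ∃ lam w : ℝ, 0 < lam ∧ 0 < w ∧ |lam - 1| < δ ∧
        1 + u ≤ p (lam * w) / p w := by
      rcases le_abs.1 hyp with hcase | hcase
      · -- p y ≥ p x₀ + ε : take lam = y / x₀, w = x₀
        refine ⟨y / x₀, x₀, by positivity, hx0, ?_, ?_⟩
        · have h5 : y / x₀ - 1 = (y - x₀) / x₀ := by field_simp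
          rw [h5, abs_div, abs_of_pos hx0, div_lt_iff₀ hx0]
          nlinarith [hyd1, hδ0]
        · rw [div_mul_cancel₀ y (ne_of_gt hx0), le_div_iff₀ hpx₀0]
          have h6 : u * p x₀ ≤ ε := huM _ hpx₀0 hpx₀M
          nlinarith
      · -- p x₀ ≥ p y + ε : take lam = x₀ / y, w = y
        refine ⟨x₀ / y, y, by positivity, hy0', ?_, ?_⟩
        · have h5 : x₀ / y - 1 = (x₀ - y) / y := by field_simp
          rw [h5, abs_div, abs_of_pos hy0', div_lt_iff₀ hy0']
          have h7 : |x₀ - y| = |y - x₀| := abs_sub_comm _ _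
          rw [h7]
          nlinarith [hyd1, hδ0, hy0]
        · rw [div_mul_cancel₀ x₀ (ne_of_gt hy0'), le_div_iff₀ hpy0]
          have h6 : u * p y ≤ ε := huM _ hpy0 hpyM
          nlinarith
    obtain ⟨lam, w, hlam0, hw0, hlamδ, hrat⟩ := hmain
    have hF1 : lam ^ ρ * (1 + u) ≤ limsup (fun x : ℝ => f (lam * x) / f x) atTop :=
      le_trans (mul_le_mul_of_nonneg_left hrat (Real.rpow_nonneg hlam0.le ρ))
        (hFge lam w hlam0 hw0)
    have hrpow_lb : 1 - s < lam ^ ρ := by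
      have h8 := hδ₂ (show dist lam 1 < δ₂ by
        rw [Real.dist_eq]; exact lt_of_lt_of_le hlamδ (min_le_right _ _))
      rw [Real.dist_eq, Real.one_rpow] at h8
      linarith [(abs_lt.1 h8).1]
    have hFbig : 1 + u / 2 < limsup (fun x : ℝ => f (lam * x) / f x) atTop := by
      have h7 : (1 - s) * (1 + u) < lam ^ ρ * (1 + u) :=
        mul_lt_mul_of_pos_right hrpow_lb (by linarith)
      linarith [hs1]
    have hFsmall := hδF (show dist lam 1 < δF by
      rw [Real.dist_eq]; exact lt_of_lt_of_le hlamδ (min_le_left _ _))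
    simp only [Real.dist_eq] at hFsmall
    rw [hFone] at hFsmall
    linarith [(abs_lt.1 hFsmall).2]
  · -- continuity of p implies continuity of F at 1
    intro hcont
    -- uniform continuity on a compact frame
    have hKsub : Set.Icc (1/2 : ℝ) (2 * r) ⊆ Set.Ioi 0 := by
      intro z hz
      have := hz.1
      simp only [Set.mem_Ioi]
      linarith
    have hu : UniformContinuousOn p (Set.Icc (1/2 : ℝ) (2 * r)) :=
      isCompact_Icc.uniformContinuousOn_of_continuous (hcont.mono hKsub)
    have hunif : ∀ ε > (0:ℝ), ∃ δ > (0:ℝ), ∀ lam : ℝ, |lam - 1| < δ →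
        ∀ x > (0:ℝ), |p (lam * x) - p x| ≤ ε := by
      intro ε hε
      obtain ⟨δ, hδ0, hδ⟩ := Metric.uniformContinuousOn_iff.1 hu ε hε
      refine ⟨min (δ / (2 * r)) (1 / 2), lt_min (by positivity) (by norm_num), ?_⟩
      intro lam hlam x hx
      have hl1 : |lam - 1| < 1 / 2 := lt_of_lt_of_le hlam (min_le_right _ _)
      have hl2 : |lam - 1| < δ / (2 * r) := lt_of_lt_of_le hlam (min_le_left _ _)
      obtain ⟨hlamlo, hlamhi⟩ := abs_lt.1 hl1
      have hlam0 : (0:ℝ) < lam := by linarith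
      obtain ⟨y, ⟨hy1, hy2⟩, n, rfl⟩ := reduce hr hx
      have hy0 : (0:ℝ) < y := by linarith
      have e1 : p (y * r ^ n) = p y := hzp y hy0 n
      have e2 : p (lam * (y * r ^ n)) = p (lam * y) := by
        have h3 : lam * (y * r ^ n) = (lam * y) * r ^ n := by ring
        rw [h3, hzp (lam * y) (mul_pos hlam0 hy0) n]
      rw [e1, e2]
      have hyK : y ∈ Set.Icc (1/2 : ℝ) (2 * r) := ⟨by linarith, by nlinarith⟩
      have hlyK : lam * y ∈ Set.Icc (1/2 : ℝ) (2 * r) := by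
        constructor
        · nlinarith
        · nlinarith
      have hd : dist (lam * y) y < δ := by
        rw [Real.dist_eq]
        have h4 : |lam * y - y| = |lam - 1| * y := by
          have h5 : lam * y - y = (lam - 1) * y := by ring
          rw [h5, abs_mul, abs_of_pos hy0]
        rw [h4]
        calc |lam - 1| * y ≤ |lam - 1| * r := by
              apply mul_le_mul_of_nonneg_left (le_of_lt hy2) (abs_nonneg _)
          _ < (δ / (2 * r)) * r := by
              apply mul_lt_mul_of_pos_right hl2 hr0
          _ ≤ δ := by
              rw [div_mul_eq_mul_div, div_le_iff₀ (by linarith : (0:ℝ) < 2 * r)]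
              nlinarith
      have := hδ _ hlyK _ hyK hd
      rw [Real.dist_eq] at this
      exact le_of_lt this
    --
    rw [Metric.continuousAt_iff]
    intro ε hε
    set ε₁ : ℝ := min ε 1 with hε₁def
    have hε₁0 : 0 < ε₁ := lt_min hε (by norm_num)
    have hε₁ε : ε₁ ≤ ε := min_le_left _ _
    have hε₁1 : ε₁ ≤ 1 := min_le_right _ _
    obtain ⟨δ₁, hδ₁0, hδ₁⟩ := hunif (c * ε₁ / 4) (by positivity)
    obtain ⟨δ₂, hδ₂0, hδ₂⟩ := Metric.continuousAt_iff.1 hrpow (ε₁ / 4) (by positivity)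
    refine ⟨min (min δ₁ δ₂) (1 / 2), lt_min (lt_min hδ₁0 hδ₂0) (by norm_num), ?_⟩
    intro lam hd
    rw [Real.dist_eq] at hd
    have h1 : |lam - 1| < δ₁ := lt_of_lt_of_le hd (le_trans (min_le_left _ _) (min_le_left _ _))
    have h2 : |lam - 1| < δ₂ := lt_of_lt_of_le hd (le_trans (min_le_left _ _) (min_le_right _ _))
    have h3 : |lam - 1| < 1 / 2 := lt_of_lt_of_le hd (min_le_right _ _)
    obtain ⟨hlamlo, hlamhi⟩ := abs_lt.1 h3
    have hlam0 : (0:ℝ) < lam := by linarith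
    have hub : ∀ x > (0:ℝ), p (lam * x) / p x ≤ 1 + ε₁ / 4 := by
      intro x hx
      have habs := abs_le.1 (hδ₁ lam h1 x hx)
      have hpx : c ≤ p x := hlow x hx
      have hpx0 : (0:ℝ) < p x := hpos x hx
      rw [div_le_iff₀ hpx0]
      nlinarith [habs.2]
    have hlb : 1 - ε₁ / 4 ≤ p (lam * 1) / p 1 := by
      have habs := abs_le.1 (hδ₁ lam h1 1 one_pos)
      have hpx : c ≤ p 1 := hlow 1 one_pos
      have hpx0 : (0:ℝ) < p 1 := hpos 1 one_pos
      rw [le_div_iff₀ hpx0]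
      nlinarith [habs.1]
    have hF_ub := hFle lam (1 + ε₁ / 4) hlam0 hub
    have hF_lb : lam ^ ρ * (1 - ε₁ / 4) ≤
        limsup (fun x : ℝ => f (lam * x) / f x) atTop := by
      refine le_trans ?_ (hFge lam 1 hlam0 one_pos)
      exact mul_le_mul_of_nonneg_left hlb (Real.rpow_nonneg hlam0.le ρ)
    have hrp : |lam ^ ρ - 1| < ε₁ / 4 := by
      have := hδ₂ (show dist lam 1 < δ₂ by rwa [Real.dist_eq])
      rwa [Real.dist_eq, Real.one_rpow] at this
    obtain ⟨hrp1, hrp2⟩ := abs_lt.1 hrp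
    have hρnn : (0:ℝ) ≤ lam ^ ρ := Real.rpow_nonneg hlam0.le ρ
    have k1 : lam ^ ρ * (1 + ε₁ / 4) ≤ (1 + ε₁ / 4) * (1 + ε₁ / 4) :=
      mul_le_mul_of_nonneg_right (by linarith) (by linarith)
    have k2 : (1 - ε₁ / 4) * (1 - ε₁ / 4) ≤ lam ^ ρ * (1 - ε₁ / 4) :=
      mul_le_mul_of_nonneg_right (by linarith) (by linarith)
    show dist (limsup (fun x : ℝ => f (lam * x) / f x) atTop)
        (limsup (fun x : ℝ => f (1 * x) / f x) atTop) < ε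
    rw [Real.dist_eq, hFone, abs_lt]
    constructor
    · nlinarith [sq_nonneg ε₁]
    · nlinarith [sq_nonneg ε₁]
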